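/- arXiv:math/0607301 — 4 statements merged into one kernel-verified Lean document; each statement's English description precedes it below -/
import Mathlib

section
/- Let (W,S) be a chordal Coxeter system with a designated set of bad irreducible simplices containing at most one bad 5-edge, and suppose S has no bad separators. Let B be a simplex of (W,S) with two singleton components {a} and {b} for which there exists c ∈ S − B such that A = {a,b,c} is a bad maximal irreducible simplex of (W,S). Then B − {a,b} ⊆ A^⊥ and B ∪ {c} is a simplex of (W,S). -/
/-- A simple graph is *chordal* if every cycle of length at least four has a chord,
that is, an edge of the graph joining two vertices of the cycle that is not an
edge of the cycle. -/
def SimpleGraph.IsChordal {V : Type*} (G : SimpleGraph V) : Prop :=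
  ∀ ⦃v : V⦄ (w : G.Walk v v), w.IsCycle → 4 ≤ w.length →
    ∃ a b, a ∈ w.support ∧ b ∈ w.support ∧ G.Adj a b ∧ s(a, b) ∉ w.edges

/-- `B` is a `(c,f)`-separator of `G`: `c, f ∉ B` and `c` and `f` lie in different
connected components of the induced subgraph `G − B`. -/
def SimpleGraph.IsSeparator {V : Type*} (G : SimpleGraph V) (c f : V) (Bs : Set V) : Prop :=
  ∃ (hc : c ∈ Bsᶜ) (hf : f ∈ Bsᶜ), ¬ (G.induce Bsᶜ).Reachable ⟨c, hc⟩ ⟨f, hf⟩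

/-- `B` is a minimal `(c,f)`-separator: no proper subset of `B` is a `(c,f)`-separator. -/
def SimpleGraph.IsMinSeparator {V : Type*} (G : SimpleGraph V) (c f : V) (Bs : Set V) : Prop :=
  G.IsSeparator c f Bs ∧ ∀ Bs' ⊂ Bs, ¬ G.IsSeparator c f Bs'

/-- `u` and `g` lie in the same connected component of `G − B`. -/
def SimpleGraph.InSepComp {V : Type*} (G : SimpleGraph V) (Bs : Set V) (u g : V) : Prop :=
  ∃ (hu : u ∈ Bsᶜ) (hg : g ∈ Bsᶜ), (G.induce Bsᶜ).Reachable ⟨u, hu⟩ ⟨g, hg⟩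

namespace CoxeterMatrix

variable {B : Type*}

/-- The underlying graph of the presentation diagram of a Coxeter matrix:
vertices are the indices, and `s, t` are adjacent when `m(s,t) < ∞`
(`0` encodes `∞`). -/
def pDiagram (M : CoxeterMatrix B) : SimpleGraph B where
  Adj s t := s ≠ t ∧ M s t ≠ 0
  symm := by constructor; intro s t h; exact ⟨h.1.symm, by rw [M.symmetric]; exact h.2⟩
  loopless := by constructor; intro s h; exact h.1 rfl

/-- The underlying graph of the Coxeter diagram induced on a subset `A`:
`s, t ∈ A` are adjacent when `m(s,t) > 2` (including `m(s,t) = ∞`, encoded by `0`). -/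
def cDiagramOn (M : CoxeterMatrix B) (A : Set B) : SimpleGraph A where
  Adj s t := (s : B) ≠ (t : B) ∧ M s t ≠ 2
  symm := by constructor; intro s t h; exact ⟨h.1.symm, by rw [M.symmetric]; exact h.2⟩
  loopless := by constructor; intro s h; exact h.1 rfl

/-- A *simplex*: a subset whose elements pairwise satisfy `m(s,t) < ∞`. -/
def IsSimplex (M : CoxeterMatrix B) (A : Set B) : Prop :=
  A.Pairwise fun s t => M s t ≠ 0

/-- A subset is *irreducible* if its Coxeter diagram is connected. -/
def IsIrreducible (M : CoxeterMatrix B) (A : Set B) : Prop :=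
  (M.cDiagramOn A).Connected

def IsIrredSimplex (M : CoxeterMatrix B) (A : Set B) : Prop :=
  M.IsSimplex A ∧ M.IsIrreducible A

/-- A maximal irreducible simplex. -/
def IsMaxIrredSimplex (M : CoxeterMatrix B) (A : Set B) : Prop :=
  M.IsIrredSimplex A ∧ ∀ A' : Set B, A ⊂ A' → ¬ M.IsIrredSimplex A'

/-- `A^⊥ = {s : m(s,a) = 2 for all a ∈ A}`. -/
def perp (M : CoxeterMatrix B) (A : Set B) : Set B :=
  {s | ∀ a ∈ A, M s a = 2}

/-- Type `G₃` (= `H₃`): labels `3, 5` on a path, other label `2`. -/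
def IsTypeG3 (M : CoxeterMatrix B) (A : Set B) : Prop :=
  ∃ a b c : B, A = {a, b, c} ∧ M a b = 3 ∧ M b c = 5 ∧ M a c = 2

/-- Type `G₄` (= `H₄`): labels `3, 3, 5` on a path, other labels `2`. -/
def IsTypeG4 (M : CoxeterMatrix B) (A : Set B) : Prop :=
  ∃ a b c d : B, A = {a, b, c, d} ∧ M a b = 3 ∧ M b c = 3 ∧ M c d = 5 ∧
    M a c = 2 ∧ M a d = 2 ∧ M b d = 2

/-- A set of *bad edges*: a symmetric set of pairs `{a,b}` with `m(a,b) ≥ 5` such that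
every irreducible simplex properly containing `{a,b}` is of type `G₃` or `G₄`. -/
def IsBadEdgeSet (M : CoxeterMatrix B) (E : B → B → Prop) : Prop :=
  (∀ a b, E a b → E b a) ∧
  (∀ a b, E a b → M a b = 0 ∨ 5 ≤ M a b) ∧
  (∀ a b, E a b → ∀ A : Set B, M.IsIrredSimplex A → ({a, b} : Set B) ⊂ A →
    M.IsTypeG3 A ∨ M.IsTypeG4 A)

/-- A *bad* irreducible simplex: an irreducible simplex containing a bad edge. -/
def IsBadSimplex (M : CoxeterMatrix B) (E : B → B → Prop) (A : Set B) : Prop :=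
  M.IsIrredSimplex A ∧ ∃ a ∈ A, ∃ b ∈ A, E a b

/-- A *bad separator*: a subset `Bs` containing a pair of eyes `a, b` with `m(a,b) = 2`,
with a bad focus `c ∉ Bs` making `{a,b,c}` a bad maximal irreducible simplex,
`Bs ⊆ {a,b} ∪ {a,b,c}^⊥`, and with a good focus `f ∉ Bs` making `Bs` a minimal
`(c,f)`-separator of the presentation diagram. -/
def IsBadSeparator (M : CoxeterMatrix B) (E : B → B → Prop) (Bs : Set B) : Prop :=
  ∃ a b c : B, a ∈ Bs ∧ b ∈ Bs ∧ M a b = 2 ∧ c ∉ Bs ∧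
    M.IsMaxIrredSimplex {a, b, c} ∧ M.IsBadSimplex E {a, b, c} ∧
    Bs ⊆ {a, b} ∪ M.perp {a, b, c} ∧
    ∃ f, f ∉ Bs ∧ M.pDiagram.IsMinSeparator c f Bs

/-- `{x, y}` is a bad 5-edge: `m(x,y) = 5` and every irreducible simplex
properly containing `{x,y}` is of type `G₃` or `G₄`. -/
def IsBad5Edge (M : CoxeterMatrix B) (x y : B) : Prop :=
  x ≠ y ∧ M x y = 5 ∧ ∀ A : Set B, M.IsIrredSimplex A → ({x, y} : Set B) ⊂ A →
    M.IsTypeG3 A ∨ M.IsTypeG4 A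

/-- The bad-edge set consisting of the single unordered pair `{x, y}`. -/
def singleEdge (x y : B) : B → B → Prop :=
  fun u v => (u = x ∧ v = y) ∨ (u = y ∧ v = x)

end CoxeterMatrix


section Aux
set_option linter.unusedSectionVars false

namespace SimpleGraph

variable {V : Type*} [DecidableEq V] {G : SimpleGraph V}

/-- connectivity within a vertex set, via walks in `G`. -/
def ConnOn (G : SimpleGraph V) (S : Set V) (u v : V) : Prop :=
  ∃ w : G.Walk u v, ∀ z ∈ w.support, z ∈ S

lemma connOn_of_reachable {S : Set V} {u v : V} (hu : u ∈ S) (hv : v ∈ S)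
    (h : (G.induce S).Reachable ⟨u, hu⟩ ⟨v, hv⟩) : G.ConnOn S u v := by
  obtain ⟨w⟩ := h
  refine ⟨w.map (Embedding.induce S).toHom, ?_⟩
  intro z hz
  replace hz : z ∈ (w.map (Embedding.induce S).toHom).support := hz
  rw [Walk.support_map, List.mem_map] at hz
  obtain ⟨⟨z', hz'⟩, _, rfl⟩ := hz
  exact hz'

lemma reachable_of_connOn {S : Set V} : ∀ {u v : V} (w : G.Walk u v),
    (∀ z ∈ w.support, z ∈ S) → ∀ (hu : u ∈ S) (hv : v ∈ S),
    (G.induce S).Reachable ⟨u, hu⟩ ⟨v, hv⟩ := by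
  intro u v w
  induction w with
  | nil => intro _ hu hv; exact Reachable.refl _
  | @cons u x v h p ih =>
    intro hs hu hv
    have hx : x ∈ S := hs x (by simp)
    have hadj : (G.induce S).Adj ⟨u, hu⟩ ⟨x, hx⟩ := h
    exact hadj.reachable.trans (ih (fun z hz => hs z (by simp [hz])) hx hv)

lemma ConnOn.symm {S : Set V} {u v : V} (h : G.ConnOn S u v) : G.ConnOn S v u := by
  obtain ⟨w, hw⟩ := h
  exact ⟨w.reverse, fun z hz => hw z (by rwa [Walk.support_reverse, List.mem_reverse] at hz)⟩

lemma ConnOn.trans {S : Set V} {u v x : V} (h : G.ConnOn S u v) (h' : G.ConnOn S v x) :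
    G.ConnOn S u x := by
  obtain ⟨w, hw⟩ := h
  obtain ⟨w', hw'⟩ := h'
  refine ⟨w.append w', fun z hz => ?_⟩
  rw [Walk.mem_support_append_iff] at hz
  rcases hz with hz | hz
  · exact hw z hz
  · exact hw' z hz

lemma connOn_of_mem_support {S : Set V} {p c : V} (w : G.Walk p c)
    (hw : ∀ z ∈ w.support, z ∈ S) {z : V} (hz : z ∈ w.support) : G.ConnOn S z c :=
  ⟨w.dropUntil z hz, fun y hy => hw y (Walk.support_dropUntil_subset _ _ hy)⟩

lemma not_connOn_of_isSeparator {Bs : Set V} {c x : V} (hsep : G.IsSeparator c x Bs) :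
    ¬ G.ConnOn Bsᶜ c x := by
  obtain ⟨hc, hx, hr⟩ := hsep
  rintro ⟨w, hw⟩
  exact hr (reachable_of_connOn w hw hc hx)

lemma adj_of_length_le_one {u v : V} (huv : u ≠ v) (w : G.Walk u v) (h : w.length ≤ 1) :
    G.Adj u v := by
  cases w with
  | nil => exact absurd rfl huv
  | cons h' p =>
    cases p with
    | nil => exact h'
    | cons h'' p' => simp [Walk.length_cons] at h

open Classical in
lemma exists_min_walk {T : Set V} {u v : V} (h : ∃ w : G.Walk u v, ∀ z ∈ w.support, z ∈ T) :
    ∃ P : G.Walk u v, P.IsPath ∧ (∀ z ∈ P.support, z ∈ T) ∧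
      ∀ w : G.Walk u v, (∀ z ∈ w.support, z ∈ T) → P.length ≤ w.length := by
  obtain ⟨w0, hw0⟩ := h
  have hQ : ∃ n, ∃ w : G.Walk u v, (∀ z ∈ w.support, z ∈ T) ∧ w.length = n :=
    ⟨w0.length, w0, hw0, rfl⟩
  obtain ⟨w, hwT, hwl⟩ := Nat.find_spec hQ
  refine ⟨w.bypass, Walk.bypass_isPath w,
    fun z hz => hwT z (Walk.support_bypass_subset w hz), fun w' hw' => ?_⟩
  have h1 : w.bypass.length ≤ w.length := Walk.length_bypass_le w
  have h2 : Nat.find hQ ≤ w'.length := Nat.find_le ⟨w', hw', rfl⟩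
  omega

lemma edge_mem_of_min_walk {T : Set V} {s t : V} {P : G.Walk s t}
    (hT : ∀ z ∈ P.support, z ∈ T)
    (hmin : ∀ w : G.Walk s t, (∀ z ∈ w.support, z ∈ T) → P.length ≤ w.length)
    {u v : V} (hadj : G.Adj u v) (hu : u ∈ P.support) (hv : v ∈ P.support) :
    s(u, v) ∈ P.edges := by
  have key : ∀ {u v : V}, G.Adj u v → ∀ (w1 : G.Walk s u) (w3 : G.Walk u v) (w4 : G.Walk v t),
      P = w1.append (w3.append w4) → s(u, v) ∈ P.edges := by
    intro u v hadj w1 w3 w4 hP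
    have hlen : P.length = w1.length + (w3.length + w4.length) := by
      rw [hP, Walk.length_append, Walk.length_append]
    have hmem : ∀ z ∈ (w1.append (Walk.cons hadj w4)).support, z ∈ T := by
      intro z hz
      rw [Walk.mem_support_append_iff] at hz
      apply hT
      rw [hP, Walk.mem_support_append_iff, Walk.mem_support_append_iff]
      rcases hz with h | h
      · exact Or.inl h
      · rw [Walk.support_cons, List.mem_cons] at h
        rcases h with rfl | h
        · exact Or.inr (Or.inl (Walk.start_mem_support _))
        · exact Or.inr (Or.inr h)
    have hle := hmin _ hmem
    rw [Walk.length_append, Walk.length_cons] at hle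
    have h3 : w3.length ≤ 1 := by omega
    cases w3 with
    | nil => exact absurd hadj (G.loopless.irrefl u)
    | cons h' p =>
      cases p with
      | nil =>
        rw [hP, Walk.edges_append, Walk.edges_append]
        have : s(u, v) ∈ (Walk.cons h' Walk.nil : G.Walk u v).edges := by simp
        exact List.mem_append_right _ (List.mem_append_left _ this)
      | cons h'' p' => simp [Walk.length_cons] at h3
  obtain ⟨q, r, rfl⟩ := Walk.mem_support_iff_exists_append.mp hu
  rw [Walk.mem_support_append_iff] at hv
  rcases hv with hv | hv
  · obtain ⟨q1, q2, rfl⟩ := Walk.mem_support_iff_exists_append.mp hv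
    rw [Sym2.eq_swap]
    exact key hadj.symm q1 q2 r (Walk.append_assoc _ _ _).symm
  · obtain ⟨r1, r2, rfl⟩ := Walk.mem_support_iff_exists_append.mp hv
    exact key hadj q r1 r2 rfl

lemma head_tail_aux {T : Set V} {u c : V} (w : G.Walk u c) (hne : u ≠ c)
    (hp : w.IsPath) (hsup : ∀ z ∈ w.support, z ∈ T) :
    ∃ z, G.Adj u z ∧ ∃ p : G.Walk z c, (u ∉ p.support ∧ ∀ y ∈ p.support, y ∈ T) := by
  cases w with
  | nil => exact absurd rfl hne
  | cons h p =>
    refine ⟨_, h, p, ?_, fun y hy => hsup y (by simp [hy])⟩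
    have := hp.support_nodup
    rw [Walk.support_cons, List.nodup_cons] at this
    exact this.1

lemma minsep_neighbor {Bs : Set V} {c x : V} (hmin : G.IsMinSeparator c x Bs)
    {u : V} (hu : u ∈ Bs) :
    ∃ p q, G.Adj u p ∧ G.Adj u q ∧ G.ConnOn Bsᶜ p c ∧ G.ConnOn Bsᶜ q x := by
  obtain ⟨hsep0, hminimal⟩ := hmin
  have hminimal0 := hsep0
  obtain ⟨hc, hx, _⟩ := hsep0
  have hcc : c ∈ (Bs \ {u})ᶜ := fun h => hc h.1
  have hxc : x ∈ (Bs \ {u})ᶜ := fun h => hx h.1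
  have hss : Bs \ {u} ⊂ Bs := ⟨Set.diff_subset, fun hsup => (hsup hu).2 rfl⟩
  have hnot := hminimal _ hss
  rw [SimpleGraph.IsSeparator] at hnot
  push_neg at hnot
  have hconn : G.ConnOn (Bs \ {u})ᶜ c x := connOn_of_reachable hcc hxc (hnot hcc hxc)
  obtain ⟨w0, hw0⟩ := hconn
  have hwT : ∀ z ∈ w0.bypass.support, z ∈ (Bs \ {u})ᶜ :=
    fun z hz => hw0 z (Walk.support_bypass_subset w0 hz)
  have hwP : w0.bypass.IsPath := Walk.bypass_isPath w0
  set w := w0.bypass with hwdef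
  have husup : u ∈ w.support := by
    by_contra h
    refine not_connOn_of_isSeparator hminimal0 ⟨w, fun z hz => ?_⟩
    intro hzB
    exact hwT z hz ⟨hzB, fun he => h (he ▸ hz)⟩
  obtain ⟨q, r, hqr⟩ := Walk.mem_support_iff_exists_append.mp husup
  have hq : q.IsPath := Walk.IsPath.of_append_left (hqr ▸ hwP)
  have hr : r.IsPath := Walk.IsPath.of_append_right (hqr ▸ hwP)
  have hqT : ∀ z ∈ q.reverse.support, z ∈ (Bs \ {u})ᶜ := by
    intro z hz
    rw [Walk.support_reverse, List.mem_reverse] at hz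
    exact hwT z (hqr ▸ (Walk.mem_support_append_iff _ _).mpr (Or.inl hz))
  have hrT : ∀ z ∈ r.support, z ∈ (Bs \ {u})ᶜ :=
    fun z hz => hwT z (hqr ▸ (Walk.mem_support_append_iff _ _).mpr (Or.inr hz))
  have hune : u ≠ c := fun he => hc (he ▸ hu)
  have hunx : u ≠ x := fun he => hx (he ▸ hu)
  obtain ⟨zp, hup, p, hpu, hpT⟩ := head_tail_aux q.reverse hune hq.reverse hqT
  obtain ⟨zq, hup', p', hpu', hpT'⟩ := head_tail_aux r hunx hr hrT
  refine ⟨zp, zq, hup, hup', ⟨p, fun y hy => ?_⟩, ⟨p', fun y hy => ?_⟩⟩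
  · intro hyB
    exact hpT y hy ⟨hyB, fun he => hpu (he ▸ hy)⟩
  · intro hyB
    exact hpT' y hy ⟨hyB, fun he => hpu' (he ▸ hy)⟩

lemma walk_through_comp {S : Set V} {c s t ps pt : V} (hips : G.Adj s ps) (hipt : G.Adj t pt)
    (hcps : G.ConnOn S ps c) (hcpt : G.ConnOn S pt c) :
    ∃ w : G.Walk s t, ∀ z ∈ w.support, z ∈ insert s (insert t {z | z ∈ S ∧ G.ConnOn S z c}) := by
  obtain ⟨wps, hwps⟩ := hcps
  obtain ⟨wpt, hwpt⟩ := hcpt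
  refine ⟨Walk.cons hips ((wps.append wpt.reverse).concat hipt.symm), ?_⟩
  intro z hz
  rw [Walk.support_cons, List.mem_cons] at hz
  rcases hz with rfl | hz
  · exact Set.mem_insert _ _
  rw [Walk.concat_eq_append, Walk.mem_support_append_iff] at hz
  rcases hz with hz | hz
  · rw [Walk.mem_support_append_iff] at hz
    refine Set.mem_insert_of_mem _ (Set.mem_insert_of_mem _ ?_)
    rcases hz with hz | hz
    · exact ⟨hwps z hz, connOn_of_mem_support wps hwps hz⟩
    · rw [Walk.support_reverse, List.mem_reverse] at hz
      exact ⟨hwpt z hz, connOn_of_mem_support wpt hwpt hz⟩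
  · rw [Walk.support_cons, List.mem_cons] at hz
    rcases hz with rfl | hz
    · exact Set.mem_insert_of_mem _ (Set.mem_insert_of_mem _
        ⟨hwpt _ wpt.start_mem_support, connOn_of_mem_support wpt hwpt wpt.start_mem_support⟩)
    · rw [Walk.support_nil, List.mem_singleton] at hz
      exact hz ▸ Set.mem_insert_of_mem _ (Set.mem_insert _ _)

lemma IsMinSeparator.adj_of_chordal (hch : G.IsChordal) {Bs : Set V} {c x : V}
    (hmin : G.IsMinSeparator c x Bs) {s t : V} (hs : s ∈ Bs) (ht : t ∈ Bs) (hst : s ≠ t) :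
    G.Adj s t := by
  by_contra hadj
  obtain ⟨ps, qs, hips, hiqs, hcps, hcqs⟩ := minsep_neighbor hmin hs
  obtain ⟨pt, qt, hipt, hiqt, hcpt, hcqt⟩ := minsep_neighbor hmin ht
  set Cc : Set V := {z | z ∈ Bsᶜ ∧ G.ConnOn Bsᶜ z c} with hCc
  set Cx : Set V := {z | z ∈ Bsᶜ ∧ G.ConnOn Bsᶜ z x} with hCx
  have hdisj : ∀ z, z ∈ Cc → z ∈ Cx → False := fun z h1 h2 =>
    not_connOn_of_isSeparator hmin.1 ((h1.2.symm).trans h2.2)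
  obtain ⟨P, hPp, hPT, hPmin⟩ := exists_min_walk (walk_through_comp hips hipt hcps hcpt)
  obtain ⟨Q, hQp, hQT, hQmin⟩ := exists_min_walk (walk_through_comp hiqt hiqs hcqt hcqs)
  have hP2 : 2 ≤ P.length := by
    by_contra h
    exact hadj (adj_of_length_le_one hst P (by omega))
  have hQ2 : 2 ≤ Q.length := by
    by_contra h
    exact hadj ((adj_of_length_le_one (Ne.symm hst) Q (by omega)).symm)
  have hPS : ∀ z ∈ P.support, z = s ∨ z = t ∨ z ∈ Cc := by
    intro z hz
    simpa [Set.mem_insert_iff, hCc] using hPT z hz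
  have hQS : ∀ z ∈ Q.support, z = s ∨ z = t ∨ z ∈ Cx := by
    intro z hz
    have := hQT z hz
    simp [Set.mem_insert_iff] at this
    tauto
  have hint : ∀ z, z ∈ P.support → z ∈ Q.support → z = s ∨ z = t := by
    intro z h1 h2
    rcases hPS z h1 with rfl | rfl | hz1
    · exact Or.inl rfl
    · exact Or.inr rfl
    rcases hQS z h2 with rfl | rfl | hz2
    · exact Or.inl rfl
    · exact Or.inr rfl
    exact (hdisj z hz1 hz2).elim
  have hlen : 4 ≤ (P.append Q).length := by
    rw [Walk.length_append]; omega
  have hcyc : (P.append Q).IsCycle := by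
    refine ⟨⟨⟨?_⟩, ?_⟩, ?_⟩
    · rw [Walk.edges_append, List.nodup_append]
      refine ⟨hPp.edges_nodup, hQp.edges_nodup, ?_⟩
      have hdisjE : ∀ y1 y2, s(y1, y2) ∈ P.edges → s(y1, y2) ∈ Q.edges → False := by
        intro y1 y2 he1 he2
        have h1 := P.fst_mem_support_of_mem_edges he1
        have h2 := P.snd_mem_support_of_mem_edges he1
        have h3 := Q.fst_mem_support_of_mem_edges he2
        have h4 := Q.snd_mem_support_of_mem_edges he2
        have hadj' := P.adj_of_mem_edges he1
        rcases hint y1 h1 h3 with rfl | rfl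
        · rcases hint y2 h2 h4 with rfl | rfl
          · exact hadj'.ne rfl
          · exact hadj hadj'
        · rcases hint y2 h2 h4 with rfl | rfl
          · exact hadj hadj'.symm
          · exact hadj'.ne rfl
      intro e he1 e' he2 hee
      subst hee
      exact Sym2.ind hdisjE e he1 he2
    · intro h
      have h0 : (P.append Q).length = 0 := by rw [h]; rfl
      omega
    · rw [Walk.tail_support_append, List.nodup_append]
      refine ⟨hPp.support_nodup.tail, hQp.support_nodup.tail, ?_⟩
      intro z hz1 z' hz2 hzz
      subst hzz
      have hzP : z ∈ P.support := List.tail_subset _ hz1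
      have hzQ : z ∈ Q.support := List.tail_subset _ hz2
      rcases hint z hzP hzQ with rfl | rfl
      · have := hPp.support_nodup
        rw [P.support_eq_cons, List.nodup_cons] at this
        exact this.1 hz1
      · have := hQp.support_nodup
        rw [Q.support_eq_cons, List.nodup_cons] at this
        exact this.1 hz2
  obtain ⟨u, v, hu, hv, huv, hne⟩ := hch (P.append Q) hcyc hlen
  have hinP : ∀ {y1 y2 : V}, G.Adj y1 y2 → y1 ∈ P.support → y2 ∈ P.support →
      s(y1, y2) ∉ (P.append Q).edges → False := by
    intro y1 y2 hadj' h1 h2 hn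
    exact hn (by
      rw [Walk.edges_append]
      exact List.mem_append_left _ (edge_mem_of_min_walk hPT hPmin hadj' h1 h2))
  have hinQ : ∀ {y1 y2 : V}, G.Adj y1 y2 → y1 ∈ Q.support → y2 ∈ Q.support →
      s(y1, y2) ∉ (P.append Q).edges → False := by
    intro y1 y2 hadj' h1 h2 hn
    exact hn (by
      rw [Walk.edges_append]
      exact List.mem_append_right _ (edge_mem_of_min_walk hQT hQmin hadj' h1 h2))
  have hmixed : ∀ y1 y2, G.Adj y1 y2 → y1 ∈ P.support → y2 ∈ Q.support →
      s(y1, y2) ∉ (P.append Q).edges → False := by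
    intro y1 y2 hadj' h1 h2 hn
    rcases hPS y1 h1 with rfl | rfl | hz1
    · exact hinQ hadj' Q.end_mem_support h2 hn
    · exact hinQ hadj' Q.start_mem_support h2 hn
    rcases hQS y2 h2 with rfl | rfl | hz2
    · exact hinP hadj' h1 P.start_mem_support hn
    · exact hinP hadj' h1 P.end_mem_support hn
    have hconn : G.ConnOn Bsᶜ y1 y2 := by
      refine ⟨Walk.cons hadj' Walk.nil, ?_⟩
      intro z hz
      rw [Walk.support_cons, List.mem_cons] at hz
      rcases hz with rfl | hz
      · exact hz1.1
      · rw [Walk.support_nil, List.mem_singleton] at hz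
        exact hz ▸ hz2.1
    exact not_connOn_of_isSeparator hmin.1 ((hz1.2.symm).trans (hconn.trans hz2.2))
  rcases (Walk.mem_support_append_iff _ _).mp hu with huP | huQ <;>
    rcases (Walk.mem_support_append_iff _ _).mp hv with hvP | hvQ
  · exact hinP huv huP hvP hne
  · exact hmixed u v huv huP hvQ hne
  · exact hmixed v u huv.symm hvP huQ (by rwa [Sym2.eq_swap])
  · exact hinQ huv huQ hvQ hne

end SimpleGraph

end Aux


lemma SimpleGraph.adj_of_reachable_ne {X : Type*} {Gr : SimpleGraph X} {u v : X}
    (h : Gr.Reachable u v) (hne : u ≠ v) : ∃ z, Gr.Adj u z := by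
  obtain ⟨w⟩ := h
  cases w with
  | nil => exact absurd rfl hne
  | cons h p => exact ⟨_, h⟩

namespace CoxeterMatrix

variable {B : Type*}

lemma ne_two_of_connected (M : CoxeterMatrix B) {a b c : B} (hac : a ≠ c) (h2 : M a b = 2)
    (hconn : (M.cDiagramOn {a, b, c}).Connected) : M a c ≠ 2 := by
  have hr := hconn.preconnected ⟨a, by simp⟩ ⟨c, by simp⟩
  obtain ⟨z, hadj⟩ := SimpleGraph.adj_of_reachable_ne hr
    (fun h => hac (congrArg Subtype.val h))
  have hz := z.2
  simp only [Set.mem_insert_iff, Set.mem_singleton_iff] at hz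
  have h1 : (a : B) ≠ (z : B) := hadj.1
  have hM : M a (z : B) ≠ 2 := hadj.2
  rcases hz with hz | hz | hz
  · exact absurd hz.symm h1
  · rw [hz] at hM; exact absurd h2 hM
  · rwa [hz] at hM

lemma connected_four (M : CoxeterMatrix B) {a b c x : B} (hac : a ≠ c) (hbc : b ≠ c)
    (hxa : x ≠ a) (hxb : x ≠ b) (hxc : x ≠ c) (h1 : M a c ≠ 2) (h2 : M b c ≠ 2)
    (h3 : M x a ≠ 2 ∨ M x b ≠ 2 ∨ M x c ≠ 2) : (M.cDiagramOn {a, b, c, x}).Connected := by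
  have mc : c ∈ ({a, b, c, x} : Set B) := by simp
  have ma : a ∈ ({a, b, c, x} : Set B) := by simp
  have mb : b ∈ ({a, b, c, x} : Set B) := by simp
  have mx : x ∈ ({a, b, c, x} : Set B) := by simp
  have hra : (M.cDiagramOn {a, b, c, x}).Reachable ⟨a, ma⟩ ⟨c, mc⟩ :=
    SimpleGraph.Adj.reachable ⟨hac, h1⟩
  have hrb : (M.cDiagramOn {a, b, c, x}).Reachable ⟨b, mb⟩ ⟨c, mc⟩ :=
    SimpleGraph.Adj.reachable ⟨hbc, h2⟩
  have key : ∀ u : ({a, b, c, x} : Set B), (M.cDiagramOn {a, b, c, x}).Reachable u ⟨c, mc⟩ := by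
    rintro ⟨u, hu⟩
    simp only [Set.mem_insert_iff, Set.mem_singleton_iff] at hu
    rcases hu with rfl | rfl | rfl | rfl
    · exact hra
    · exact hrb
    · exact SimpleGraph.Reachable.refl _
    · rcases h3 with h3 | h3 | h3
      · exact (SimpleGraph.Adj.reachable
          (show (M.cDiagramOn _).Adj ⟨u, mx⟩ ⟨a, ma⟩ from ⟨hxa, h3⟩)).trans hra
      · exact (SimpleGraph.Adj.reachable
          (show (M.cDiagramOn _).Adj ⟨u, mx⟩ ⟨b, mb⟩ from ⟨hxb, h3⟩)).trans hrb
      · exact SimpleGraph.Adj.reachable ⟨hxc, h3⟩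
  haveI : Nonempty ({a, b, c, x} : Set B) := ⟨⟨c, mc⟩⟩
  exact ⟨fun u v => (key u).trans (key v).symm⟩

end CoxeterMatrix

/-- **Lemma 4.5.** Let `(W,S)` be a chordal Coxeter system with a set of bad
irreducible simplices coming from a set of bad edges containing at most one bad
5-edge, and suppose `S` has no bad separators. Let `Bset` be a simplex with two
singleton components `{a}` and `{b}` for which there is `c ∈ S − Bset` such that
`A = {a,b,c}` is a bad maximal irreducible simplex. Then `Bset − {a,b} ⊆ A^⊥` and
`Bset ∪ {c}` is a simplex. -/
theorem diff_subset_perp_and_isSimplex {B : Type*} [Finite B] (M : CoxeterMatrix B)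
    (E : B → B → Prop) (hE : M.IsBadEdgeSet E)
    (hch : M.pDiagram.IsChordal)
    (honce : ∀ a b a' b', E a b → E a' b' → M a b = 5 → M a' b' = 5 →
      ({a, b} : Set B) = ({a', b'} : Set B))
    (hnobad : ∀ Bs : Set B, ¬ M.IsBadSeparator E Bs)
    (Bset : Set B) (hB : M.IsSimplex Bset)
    (a b : B) (ha : a ∈ Bset) (hb : b ∈ Bset) (hab : a ≠ b)
    (hsa : ∀ x ∈ Bset, x ≠ a → M a x = 2)
    (hsb : ∀ x ∈ Bset, x ≠ b → M b x = 2)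
    (c : B) (hc : c ∉ Bset)
    (hA : M.IsMaxIrredSimplex {a, b, c}) (hbad : M.IsBadSimplex E {a, b, c}) :
    Bset \ {a, b} ⊆ M.perp {a, b, c} ∧ M.IsSimplex (Bset ∪ {c}) := by
  classical
  set G := M.pDiagram with hG
  have hba : b ≠ a := Ne.symm hab
  have hab2 : M a b = 2 := hsa b hb hba
  have hac : a ≠ c := fun h => hc (h ▸ ha)
  have hbc : b ≠ c := fun h => hc (h ▸ hb)
  have memA_a : a ∈ ({a, b, c} : Set B) := by simp
  have memA_b : b ∈ ({a, b, c} : Set B) := by simp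
  have memA_c : c ∈ ({a, b, c} : Set B) := by simp
  have hMac0 : M a c ≠ 0 := hA.1.1 memA_a memA_c hac
  have hMbc0 : M b c ≠ 0 := hA.1.1 memA_b memA_c hbc
  have hMac2 : M a c ≠ 2 := CoxeterMatrix.ne_two_of_connected M hac hab2 hA.1.2
  have hMbc2 : M b c ≠ 2 := by
    have hset : ({a, b, c} : Set B) = {b, a, c} := Set.insert_comm a b {c}
    have hconn : (M.cDiagramOn {b, a, c}).Connected := hset ▸ hA.1.2
    exact CoxeterMatrix.ne_two_of_connected M hbc ((M.symmetric b a).trans hab2) hconn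
  have hmax4 : ∀ x : B, x ≠ a → x ≠ b → x ≠ c → M x a ≠ 0 → M x b ≠ 0 → M x c ≠ 0 →
      (M x a ≠ 2 ∨ M x b ≠ 2 ∨ M x c ≠ 2) → False := by
    intro x hxa hxb hxc h0a h0b h0c h3
    have hseq : ({a, b, c, x} : Set B) = insert x {a, b, c} := by
      ext z
      simp only [Set.mem_insert_iff, Set.mem_singleton_iff]
      tauto
    have hsub : ({a, b, c} : Set B) ⊂ {a, b, c, x} := by
      constructor
      · intro z hz
        simp only [Set.mem_insert_iff, Set.mem_singleton_iff] at hz ⊢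
        tauto
      · intro hsup
        have := hsup (show x ∈ ({a, b, c, x} : Set B) by simp)
        simp only [Set.mem_insert_iff, Set.mem_singleton_iff] at this
        tauto
    refine hA.2 _ hsub ⟨?_, ?_⟩
    · show M.IsSimplex {a, b, c, x}
      rw [CoxeterMatrix.IsSimplex, hseq]
      haveI : Std.Symm (fun u v : B => M u v ≠ 0) := ⟨fun u v h => by rw [M.symmetric]; exact h⟩
      refine Set.pairwise_insert_of_symm.mpr ⟨hA.1.1, ?_⟩
      · intro z hz _
        simp only [Set.mem_insert_iff, Set.mem_singleton_iff] at hz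
        rcases hz with rfl | rfl | rfl
        · exact h0a
        · exact h0b
        · exact h0c
    · exact CoxeterMatrix.connected_four M hac hbc hxa hxb hxc hMac2 hMbc2 h3
  have hkey : ∀ x, x ∈ Bset → x ≠ a → x ≠ b → M c x ≠ 0 := by
    intro x hx hxa hxb hMcx
    have hxc : x ≠ c := fun h => hc (h ▸ hx)
    have hcx : c ≠ x := Ne.symm hxc
    have hMax2 : M a x = 2 := hsa x hx hxa
    have hMbx2 : M b x = 2 := hsb x hx hxb
    have hcN : c ∈ (G.neighborSet c)ᶜ := fun h => G.loopless.irrefl c h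
    have hxN : x ∈ (G.neighborSet c)ᶜ := fun h => h.2 hMcx
    have hsepN : G.IsSeparator c x (G.neighborSet c) := by
      refine ⟨hcN, hxN, ?_⟩
      intro hr
      obtain ⟨z, hadjz⟩ := SimpleGraph.adj_of_reachable_ne hr
        (fun h => hcx (congrArg Subtype.val h))
      exact z.2 hadjz
    obtain ⟨Bs, hBsmem, hBsmin⟩ := (wellFounded_lt (α := Set B)).has_min
      {Bs | Bs ⊆ G.neighborSet c ∧ G.IsSeparator c x Bs} ⟨G.neighborSet c, subset_rfl, hsepN⟩
    obtain ⟨hBsN, hBsSep⟩ := hBsmem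
    have hminsep : G.IsMinSeparator c x Bs :=
      ⟨hBsSep, fun Bs' hss hsep' => hBsmin Bs' ⟨hss.subset.trans hBsN, hsep'⟩ hss⟩
    obtain ⟨hcBs', hxBs', hnr⟩ := hBsSep
    have hadjca : G.Adj c a := ⟨Ne.symm hac, by rw [M.symmetric]; exact hMac0⟩
    have hadjcb : G.Adj c b := ⟨Ne.symm hbc, by rw [M.symmetric]; exact hMbc0⟩
    have hadjax : G.Adj a x := ⟨Ne.symm hxa, by simp [hMax2]⟩
    have hadjbx : G.Adj b x := ⟨Ne.symm hxb, by simp [hMbx2]⟩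
    have haBs : a ∈ Bs := by
      by_contra h
      refine SimpleGraph.not_connOn_of_isSeparator ⟨hcBs', hxBs', hnr⟩
        ⟨SimpleGraph.Walk.cons hadjca (SimpleGraph.Walk.cons hadjax SimpleGraph.Walk.nil), ?_⟩
      intro z hz
      simp only [SimpleGraph.Walk.support_cons, SimpleGraph.Walk.support_nil,
        List.mem_cons, List.mem_singleton] at hz
      rcases hz with rfl | rfl | rfl | hz
      · exact hcBs'
      · exact h
      · exact hxBs'
      · exact absurd hz (by simp)
    have hbBs : b ∈ Bs := by
      by_contra h
      refine SimpleGraph.not_connOn_of_isSeparator ⟨hcBs', hxBs', hnr⟩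
        ⟨SimpleGraph.Walk.cons hadjcb (SimpleGraph.Walk.cons hadjbx SimpleGraph.Walk.nil), ?_⟩
      intro z hz
      simp only [SimpleGraph.Walk.support_cons, SimpleGraph.Walk.support_nil,
        List.mem_cons, List.mem_singleton] at hz
      rcases hz with rfl | rfl | rfl | hz
      · exact hcBs'
      · exact h
      · exact hxBs'
      · exact absurd hz (by simp)
    refine hnobad Bs ⟨a, b, c, haBs, hbBs, hab2, ?_, hA, hbad, ?_, x, hxBs', hminsep⟩
    · intro h
      exact G.loopless.irrefl c (hBsN h)
    · intro z hz
      by_cases hza : z = a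
      · exact Set.mem_union_left _ (by simp [hza])
      by_cases hzb : z = b
      · exact Set.mem_union_left _ (by simp [hzb])
      refine Set.mem_union_right _ ?_
      have hadjza : G.Adj z a :=
        SimpleGraph.IsMinSeparator.adj_of_chordal hch hminsep hz haBs hza
      have hadjzb : G.Adj z b :=
        SimpleGraph.IsMinSeparator.adj_of_chordal hch hminsep hz hbBs hzb
      have hadjcz : G.Adj c z := hBsN hz
      have hzc : z ≠ c := fun h => G.loopless.irrefl c (h ▸ hadjcz)
      have h0a : M z a ≠ 0 := hadjza.2
      have h0b : M z b ≠ 0 := hadjzb.2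
      have h0c : M z c ≠ 0 := by rw [M.symmetric]; exact hadjcz.2
      have hall : M z a = 2 ∧ M z b = 2 ∧ M z c = 2 := by
        by_contra hno
        have h3 : M z a ≠ 2 ∨ M z b ≠ 2 ∨ M z c ≠ 2 := by tauto
        exact hmax4 z hza hzb hzc h0a h0b h0c h3
      intro w hw
      simp only [Set.mem_insert_iff, Set.mem_singleton_iff] at hw
      rcases hw with rfl | rfl | rfl
      · exact hall.1
      · exact hall.2.1
      · exact hall.2.2
  have hkey2 : ∀ x, x ∈ Bset → x ≠ a → x ≠ b → M c x = 2 := by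
    intro x hx hxa hxb
    by_contra hMcx2
    have hxc : x ≠ c := fun h => hc (h ▸ hx)
    refine hmax4 x hxa hxb hxc ?_ ?_ ?_ (Or.inr (Or.inr ?_))
    · rw [M.symmetric]
      simp [hsa x hx hxa]
    · rw [M.symmetric]
      simp [hsb x hx hxb]
    · rw [M.symmetric]
      exact hkey x hx hxa hxb
    · rw [M.symmetric]
      exact hMcx2
  constructor
  · rintro x ⟨hx1, hx2⟩
    simp only [Set.mem_insert_iff, Set.mem_singleton_iff] at hx2
    push_neg at hx2
    obtain ⟨hxa, hxb⟩ := hx2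
    intro w hw
    simp only [Set.mem_insert_iff, Set.mem_singleton_iff] at hw
    rcases hw with rfl | rfl | rfl
    · rw [M.symmetric]
      exact hsa x hx1 hxa
    · rw [M.symmetric]
      exact hsb x hx1 hxb
    · rw [M.symmetric]
      exact hkey2 x hx1 hxa hxb
  · intro y hy z hz hyz
    rcases hy with hy | hy <;> rcases hz with hz | hz
    · exact hB hy hz hyz
    · rw [Set.mem_singleton_iff] at hz
      subst hz
      by_cases hya : y = a
      · rw [hya]; exact hMac0
      by_cases hyb : y = b
      · rw [hyb]; exact hMbc0
      rw [M.symmetric]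
      exact hkey y hy hya hyb
    · rw [Set.mem_singleton_iff] at hy
      subst hy
      by_cases hza : z = a
      · rw [hza, M.symmetric]; exact hMac0
      by_cases hzb : z = b
      · rw [hzb, M.symmetric]; exact hMbc0
      exact hkey z hz hza hzb
    · rw [Set.mem_singleton_iff] at hy hz
      exact absurd (hy.trans hz.symm) hyz
end

section
/- Let (W,S) be a chordal Coxeter system with a set of bad irreducible simplices. Then S has a bad separator if and only if there is a bad maximal irreducible simplex A = {a,b,c} of (W,S) with m(a,b) = 2 and an element d ∈ S − (A ∪ A^⊥) such that {a,b,d} is a simplex of (W,S). -/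
section GraphHelpers

open SimpleGraph Walk
set_option linter.unusedSectionVars false

variable {V : Type*} [DecidableEq V] {G : SimpleGraph V}

private lemma my_isPath_concat {x y z : V} {w : G.Walk x y} (hw : w.IsPath) (h : G.Adj y z)
    (hz : z ∉ w.support) : (w.concat h).IsPath := by
  rw [Walk.isPath_def, Walk.support_concat]
  refine List.Nodup.append hw.support_nodup (List.nodup_singleton z) ?_
  intro a ha haz
  rw [List.mem_singleton] at haz
  subst haz
  exact hz ha

private lemma my_walk_shortcut {x y : V} (w : G.Walk x y) (hw : w.IsPath) :
    ∀ u v : V, u ∈ w.support → v ∈ w.support → G.Adj u v → s(u, v) ∉ w.edges →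
    ∃ w' : G.Walk x y, w'.length < w.length ∧ ∀ z ∈ w'.support, z ∈ w.support := by
  induction w with
  | nil =>
    intro u v hu hv hadj _
    simp only [support_nil, List.mem_singleton] at hu hv
    exact absurd (hu.trans hv.symm) hadj.ne
  | @cons x x1 y h w' ih =>
    intro u v hu hv hadj hne
    rw [support_cons, List.mem_cons] at hu hv
    have hnex : s(u, v) ≠ s(x, x1) := by
      intro hcon; exact hne (by rw [hcon, edges_cons]; exact List.mem_cons_self)
    rcases hu with rfl | hu
    · rcases hv with rfl | hv
      · exact absurd rfl hadj.ne
      · have hvx1 : v ≠ x1 := by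
          rintro rfl; exact hnex rfl
        refine ⟨Walk.cons hadj (w'.dropUntil v hv), ?_, ?_⟩
        · have hspec := congrArg Walk.length (w'.take_spec hv)
          rw [Walk.length_append] at hspec
          have htk : (w'.takeUntil v hv).length ≠ 0 := by
            intro h0
            exact hvx1 (Walk.eq_of_length_eq_zero h0).symm
          rw [Walk.length_cons, Walk.length_cons]
          omega
        · intro z hz
          rw [support_cons, List.mem_cons] at hz
          rcases hz with rfl | hz
          · exact List.mem_cons_self
          · exact List.mem_cons_of_mem _ (w'.support_dropUntil_subset hv hz)
    · rcases hv with rfl | hv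
      · have hux1 : u ≠ x1 := by
          rintro rfl; exact hnex (Sym2.eq_swap)
        refine ⟨Walk.cons hadj.symm (w'.dropUntil u hu), ?_, ?_⟩
        · have hspec := congrArg Walk.length (w'.take_spec hu)
          rw [Walk.length_append] at hspec
          have htk : (w'.takeUntil u hu).length ≠ 0 := by
            intro h0
            exact hux1 (Walk.eq_of_length_eq_zero h0).symm
          rw [Walk.length_cons, Walk.length_cons]
          omega
        · intro z hz
          rw [support_cons, List.mem_cons] at hz
          rcases hz with rfl | hz
          · exact List.mem_cons_self
          · exact List.mem_cons_of_mem _ (w'.support_dropUntil_subset hu hz)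
      · have hne' : s(u, v) ∉ w'.edges :=
          fun hc => hne (by rw [edges_cons]; exact List.mem_cons_of_mem _ hc)
        obtain ⟨w'', hlen, hsub⟩ := ih hw.of_cons u v hu hv hadj hne'
        refine ⟨Walk.cons h w'', ?_, ?_⟩
        · rw [Walk.length_cons, Walk.length_cons]; omega
        · intro z hz
          rw [support_cons, List.mem_cons] at hz
          rcases hz with rfl | hz
          · exact List.mem_cons_self
          · exact List.mem_cons_of_mem _ (hsub z hz)

private lemma my_first_adj_prefix {p x y : V} (w : G.Walk x y) (hy : G.Adj p y) :
    ∃ (z : V) (w₁ : G.Walk x z) (w₂ : G.Walk z y),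
      w = w₁.append w₂ ∧ G.Adj p z ∧ ∀ u ∈ w₁.support, u ≠ z → ¬ G.Adj p u := by
  induction w with
  | nil =>
    exact ⟨_, Walk.nil, Walk.nil, rfl, hy, by simp⟩
  | @cons x x1 y h w' ih =>
    by_cases hpx : G.Adj p x
    · exact ⟨x, Walk.nil, Walk.cons h w', rfl, hpx, by simp⟩
    · obtain ⟨z, w₁, w₂, heq, hz, hmin⟩ := ih hy
      refine ⟨z, Walk.cons h w₁, w₂, by rw [Walk.cons_append, ← heq], hz, ?_⟩
      intro u hu hne
      rw [support_cons, List.mem_cons] at hu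
      rcases hu with rfl | hu
      · exact hpx
      · exact hmin u hu hne

private lemma my_apex_adj_all (hch : G.IsChordal) {p : V} :
    ∀ (n : ℕ) {x y : V} (w : G.Walk x y), w.length = n → w.IsPath →
    (∀ u ∈ w.support, ∀ v ∈ w.support, G.Adj u v → s(u, v) ∈ w.edges) →
    p ∉ w.support → G.Adj p x → G.Adj p y →
    ∀ z ∈ w.support, G.Adj p z := by
  intro n
  induction n using Nat.strong_induction_on with
  | _ n ih =>
    intro x y w hlen hw hcl hp hpx hpy z hz
    cases w with
    | nil =>
      simp only [support_nil, List.mem_singleton] at hz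
      exact hz ▸ hpx
    | @cons x x1 y h w' =>
      have hxsupp : x ∉ w'.support := (Walk.cons_isPath_iff h w').mp hw |>.2
      have hw' : w'.IsPath := hw.of_cons
      have hp' : p ∉ w'.support := fun hc => hp (by rw [support_cons]; exact List.mem_cons_of_mem _ hc)
      have hpnex : p ≠ x := fun hc => hp (by rw [hc, support_cons]; exact List.mem_cons_self)
      have hcl' : ∀ u ∈ w'.support, ∀ v ∈ w'.support, G.Adj u v → s(u, v) ∈ w'.edges := by
        intro u hu v hv hadj
        have hu' : u ∈ (Walk.cons h w').support := by
          rw [support_cons]; exact List.mem_cons_of_mem _ hu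
        have hv' : v ∈ (Walk.cons h w').support := by
          rw [support_cons]; exact List.mem_cons_of_mem _ hv
        have := hcl u hu' v hv' hadj
        rw [edges_cons, List.mem_cons] at this
        rcases this with heq | h2
        · exfalso
          rw [Sym2.eq_iff] at heq
          rcases heq with ⟨rfl, rfl⟩ | ⟨rfl, rfl⟩
          · exact hxsupp hu
          · exact hxsupp hv
        · exact h2
      obtain ⟨zz, w₁, w₂, heq, hzz, hmin⟩ := my_first_adj_prefix w' hpy
      cases w₁ with
      | nil =>
        have hpx1 : G.Adj p x1 := hzz
        have hlen' : w'.length < n := by rw [← hlen, Walk.length_cons]; omega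
        have hall := ih w'.length hlen' w' rfl hw' hcl' hp' hpx1 hpy
        rw [support_cons, List.mem_cons] at hz
        rcases hz with rfl | hz
        · exact hpx
        · exact hall z hz
      | @cons x1 x2 zz h₁ w₁' =>
        exfalso
        set W : G.Walk x zz := Walk.cons h (Walk.cons h₁ w₁') with hW
        have hweq : Walk.cons h w' = W.append w₂ := by
          rw [hW, heq]
          simp [Walk.cons_append]
        have hWpath : W.IsPath := by
          rw [hweq] at hw; exact hw.of_append_left
        have hWsub : ∀ t ∈ W.support, t ∈ (Walk.cons h w').support := by
          intro t ht
          rw [hweq, Walk.mem_support_append_iff]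
          exact Or.inl ht
        have hzzW : zz ∈ W.support := Walk.end_mem_support W
        have hpW : p ∉ W.support := fun hc => hp (hWsub p hc)
        have hxzz : x ≠ zz := by
          intro hcon
          have : zz ∈ (Walk.cons h₁ w₁').support := Walk.end_mem_support _
          have : zz ∈ w'.support := by
            rw [heq, Walk.mem_support_append_iff]; exact Or.inl this
          exact hxsupp (hcon ▸ this)
        have hpzz : p ≠ zz := fun hc => hpW (hc ▸ hzzW)
        have hP : (W.concat hzz.symm).IsPath := by
          rw [Walk.isPath_def, Walk.support_concat]
          refine List.Nodup.append hWpath.support_nodup (List.nodup_singleton p) ?_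
          intro a ha haz
          rw [List.mem_singleton] at haz
          subst haz
          exact hpW ha
        set P := W.concat hzz.symm with hPdef
        have hPedges : P.edges = W.edges ++ [s(zz, p)] := by
          rw [hPdef, Walk.edges_concat, List.concat_eq_append]
        have hnotmem : s(p, x) ∉ P.edges := by
          rw [hPedges, List.mem_append]
          rintro (hc | hc)
          · exact hpW (W.fst_mem_support_of_mem_edges hc)
          · rw [List.mem_singleton, Sym2.eq_iff] at hc
            rcases hc with ⟨rfl, _⟩ | ⟨_, rfl⟩
            · exact hpzz rfl
            · exact hxzz rfl
        set C : G.Walk p p := Walk.cons hpx P with hC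
        have hcyc : C.IsCycle := (Walk.cons_isCycle_iff P hpx).mpr ⟨hP, hnotmem⟩
        have hlenC : 4 ≤ C.length := by
          rw [hC, Walk.length_cons, hPdef, Walk.length_concat, hW,
            Walk.length_cons, Walk.length_cons]
          omega
        obtain ⟨u, v, hus, hvs, huv, hne⟩ := hch C hcyc hlenC
        have hsupC : ∀ t ∈ C.support, t = p ∨ t ∈ W.support := by
          intro t ht
          rw [hC, support_cons, List.mem_cons] at ht
          rcases ht with rfl | ht
          · exact Or.inl rfl
          · rw [hPdef, Walk.support_concat, List.mem_append,
              List.mem_singleton] at ht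
            rcases ht with ht | rfl
            · exact Or.inr ht
            · exact Or.inl rfl
        have hCedges : C.edges = s(p, x) :: (W.edges ++ [s(zz, p)]) := by
          rw [hC, edges_cons, hPedges]
        have hpedge : ∀ t ∈ W.support, G.Adj p t → s(p, t) ∈ C.edges := by
          intro t ht hadj
          rw [hW, support_cons, List.mem_cons] at ht
          rcases ht with rfl | ht
          · rw [hCedges]; exact List.mem_cons_self
          · by_cases htz : t = zz
            · subst htz
              rw [hCedges]
              refine List.mem_cons_of_mem _ ?_
              rw [List.mem_append, List.mem_singleton]
              exact Or.inr (Sym2.eq_swap)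
            · exact absurd hadj (hmin t ht htz)
        have hWedge : ∀ t₁ ∈ W.support, ∀ t₂ ∈ W.support, G.Adj t₁ t₂ → s(t₁, t₂) ∈ C.edges := by
          intro t₁ ht₁ t₂ ht₂ hadj
          have hin : s(t₁, t₂) ∈ (Walk.cons h w').edges :=
            hcl t₁ (hWsub _ ht₁) t₂ (hWsub _ ht₂) hadj
          rw [hweq, Walk.edges_append, List.mem_append] at hin
          rcases hin with hin | hin
          · rw [hCedges]
            exact List.mem_cons_of_mem _ (by rw [List.mem_append]; exact Or.inl hin)
          · exfalso
            have ht₁2 : t₁ ∈ w₂.support := w₂.fst_mem_support_of_mem_edges hin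
            have ht₂2 : t₂ ∈ w₂.support := w₂.snd_mem_support_of_mem_edges hin
            have hnodup : ((Walk.cons h w').support).Nodup := hw.support_nodup
            rw [hweq, Walk.support_append] at hnodup
            have hdisj := List.disjoint_of_nodup_append hnodup
            have key : ∀ t, t ∈ W.support → t ∈ w₂.support → t = zz := by
              intro t htW htw₂
              rw [w₂.support_eq_cons, List.mem_cons] at htw₂
              rcases htw₂ with rfl | htw₂
              · rfl
              · exact absurd htw₂ (hdisj htW)
            have e1 : t₁ = zz := key _ ht₁ ht₁2
            have e2 : t₂ = zz := key _ ht₂ ht₂2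
            rw [e1, e2] at hadj
            exact hadj.ne rfl
        rcases hsupC u hus with rfl | huW
        · rcases hsupC v hvs with rfl | hvW
          · exact huv.ne rfl
          · exact hne (hpedge v hvW huv)
        · rcases hsupC v hvs with rfl | hvW
          · exact hne (by rw [Sym2.eq_swap]; exact hpedge u huW huv.symm)
          · exact hne (hWedge u huW v hvW huv)

private lemma my_reach_of_walk {s : Set V} :
    ∀ {x y : V} (w : G.Walk x y), (∀ z ∈ w.support, z ∈ s) → ∀ (hx : x ∈ s) (hy : y ∈ s),
    (G.induce s).Reachable ⟨x, hx⟩ ⟨y, hy⟩ := by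
  intro x y w
  induction w with
  | nil => intro _ hx hy; exact Reachable.refl _
  | @cons x x1 y h w' ih =>
    intro hsup hx hy
    have hx1 : x1 ∈ s := hsup x1 (by rw [support_cons]; exact List.mem_cons_of_mem _ w'.start_mem_support)
    have hadj : (G.induce s).Adj ⟨x, hx⟩ ⟨x1, hx1⟩ := h
    exact hadj.reachable.trans
      (ih (fun z hz => hsup z (by rw [support_cons]; exact List.mem_cons_of_mem _ hz)) hx1 hy)

private lemma my_walk_of_reach {s : Set V} {x y : V} (hx : x ∈ s) (hy : y ∈ s)
    (h : (G.induce s).Reachable ⟨x, hx⟩ ⟨y, hy⟩) :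
    ∃ w : G.Walk x y, ∀ z ∈ w.support, z ∈ s := by
  obtain ⟨w⟩ := h
  refine ⟨w.map (SimpleGraph.Embedding.induce s).toHom, ?_⟩
  intro z hz
  replace hz : z ∈ (w.map (SimpleGraph.Embedding.induce s).toHom).support := hz
  rw [Walk.support_map, List.mem_map] at hz
  obtain ⟨⟨z', hz'⟩, _, rfl⟩ := hz
  exact hz'

private lemma my_exists_min_walk (X Y s : Set V)
    (hne : ∃ (x y : V) (w : G.Walk x y), x ∈ X ∧ y ∈ Y ∧ ∀ z ∈ w.support, z ∈ s) :
    ∃ (x y : V) (w : G.Walk x y), x ∈ X ∧ y ∈ Y ∧ (∀ z ∈ w.support, z ∈ s) ∧ w.IsPath ∧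
      (∀ u ∈ w.support, ∀ v ∈ w.support, G.Adj u v → s(u, v) ∈ w.edges) ∧
      (∀ u ∈ w.support, u ∈ X → u = x) ∧ (∀ u ∈ w.support, u ∈ Y → u = y) := by
  classical
  set T : Set ℕ := {n | ∃ (x y : V) (w : G.Walk x y),
    x ∈ X ∧ y ∈ Y ∧ (∀ z ∈ w.support, z ∈ s) ∧ w.length = n} with hT
  have hTne : T.Nonempty := by
    obtain ⟨x, y, w, hx, hy, hs⟩ := hne
    exact ⟨w.length, x, y, w, hx, hy, hs, rfl⟩
  obtain ⟨x, y, w0, hx, hy, hs0, hlen0⟩ := Nat.sInf_mem hTne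
  set w := w0.bypass with hwdef
  have hs : ∀ z ∈ w.support, z ∈ s := fun z hz => hs0 z (w0.support_bypass_subset hz)
  have hwlenle : w.length ≤ sInf T := hlen0 ▸ w0.length_bypass_le
  have hwmem : w.length ∈ T := ⟨x, y, w, hx, hy, hs, rfl⟩
  have hwlen : w.length = sInf T := le_antisymm hwlenle (Nat.sInf_le hwmem)
  have hpath : w.IsPath := w0.bypass_isPath
  have hnolt : ∀ (m : ℕ), m < w.length → m ∉ T := by
    intro m hm
    rw [hwlen] at hm
    exact Nat.notMem_of_lt_sInf hm
  refine ⟨x, y, w, hx, hy, hs, hpath, ?_, ?_, ?_⟩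
  · intro u hu v hv hadj
    by_contra hne'
    obtain ⟨w', hlt, hsub⟩ := my_walk_shortcut w hpath u v hu hv hadj hne'
    exact hnolt w'.length hlt ⟨x, y, w', hx, hy, fun z hz => hs z (hsub z hz), rfl⟩
  · intro u hu huX
    by_contra hne'
    have hspec := congrArg Walk.length (w.take_spec hu)
    rw [Walk.length_append] at hspec
    have htk : (w.takeUntil u hu).length ≠ 0 :=
      fun h0 => hne' ((Walk.eq_of_length_eq_zero h0).symm ▸ rfl)
    refine hnolt (w.dropUntil u hu).length (by omega) ⟨u, y, w.dropUntil u hu, huX, hy,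
      fun z hz => hs z (w.support_dropUntil_subset hu hz), rfl⟩
  · intro u hu huY
    by_contra hne'
    have hspec := congrArg Walk.length (w.take_spec hu)
    rw [Walk.length_append] at hspec
    have hdr : (w.dropUntil u hu).length ≠ 0 := fun h0 => hne' (Walk.eq_of_length_eq_zero h0)
    refine hnolt (w.takeUntil u hu).length (by omega) ⟨x, u, w.takeUntil u hu, hx, huY,
      fun z hz => hs z (w.support_takeUntil_subset hu hz), rfl⟩

end GraphHelpers

section CoxeterHelpers

namespace CoxeterMatrix

variable {B : Type*} (M : CoxeterMatrix B)

private lemma my_pDiagram_adj {u v : B} : M.pDiagram.Adj u v ↔ u ≠ v ∧ M u v ≠ 0 := Iff.rfl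

private lemma my_cDiagramOn_adj {A : Set B} {u v : A} :
    (M.cDiagramOn A).Adj u v ↔ (u : B) ≠ (v : B) ∧ M u v ≠ 2 := Iff.rfl

private lemma my_conn_no_iso {S : Set B} (h : M.IsIrreducible S) (u v : S) (huv : u ≠ v)
    (hiso : ∀ t : S, ¬ (M.cDiagramOn S).Adj u t) : False := by
  obtain ⟨w⟩ := h.preconnected u v
  cases w with
  | nil => exact huv rfl
  | cons hadj _ => exact hiso _ hadj

private lemma my_three_facts {a b c : B} (h : M.IsIrredSimplex {a, b, c}) (hab2 : M a b = 2) :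
    a ≠ b ∧ a ≠ c ∧ b ≠ c ∧ M a c ≠ 2 ∧ M b c ≠ 2 := by
  have hconn := h.2
  have hab : a ≠ b := by
    rintro rfl
    have := M.diagonal a
    omega
  have hma : (a : B) ∈ ({a, b, c} : Set B) := by simp
  have hmb : (b : B) ∈ ({a, b, c} : Set B) := by simp
  have hmc : (c : B) ∈ ({a, b, c} : Set B) := by simp
  have hac : a ≠ c := by
    rintro rfl
    refine my_conn_no_iso M hconn ⟨a, hma⟩ ⟨b, hmb⟩ (fun hc => hab (congrArg Subtype.val hc)) ?_
    rintro ⟨t, ht⟩ ⟨hne, hm⟩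
    simp only [Set.mem_insert_iff, Set.mem_singleton_iff] at ht
    rcases ht with rfl | rfl | rfl
    · exact hne rfl
    · exact hm hab2
    · exact hne rfl
  have hbc : b ≠ c := by
    rintro rfl
    refine my_conn_no_iso M hconn ⟨b, hmb⟩ ⟨a, hma⟩
      (fun hc => hab (congrArg Subtype.val hc).symm) ?_
    rintro ⟨t, ht⟩ ⟨hne, hm⟩
    simp only [Set.mem_insert_iff, Set.mem_singleton_iff] at ht
    rcases ht with rfl | rfl | rfl
    · exact hm (by rw [M.symmetric]; exact hab2)
    · exact hne rfl
    · exact hne rfl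
  have hac2 : M a c ≠ 2 := by
    intro hm2
    refine my_conn_no_iso M hconn ⟨a, hma⟩ ⟨b, hmb⟩ (fun hc => hab (congrArg Subtype.val hc)) ?_
    rintro ⟨t, ht⟩ ⟨hne, hm⟩
    simp only [Set.mem_insert_iff, Set.mem_singleton_iff] at ht
    rcases ht with rfl | rfl | rfl
    · exact hne rfl
    · exact hm hab2
    · exact hm hm2
  have hbc2 : M b c ≠ 2 := by
    intro hm2
    refine my_conn_no_iso M hconn ⟨b, hmb⟩ ⟨a, hma⟩
      (fun hc => hab (congrArg Subtype.val hc).symm) ?_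
    rintro ⟨t, ht⟩ ⟨hne, hm⟩
    simp only [Set.mem_insert_iff, Set.mem_singleton_iff] at ht
    rcases ht with rfl | rfl | rfl
    · exact hm (by rw [M.symmetric]; exact hab2)
    · exact hne rfl
    · exact hm hm2
  exact ⟨hab, hac, hbc, hac2, hbc2⟩

end CoxeterMatrix

end CoxeterHelpers
/-- **Lemma 4.4.** Let `(W,S)` be a chordal Coxeter system with a set of bad
irreducible simplices. Then `S` has a bad separator if and only if there is a bad
maximal irreducible simplex `A = {a,b,c}` with `m(a,b) = 2` and an element
`d ∈ S − (A ∪ A^⊥)` such that `{a,b,d}` is a simplex. -/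
theorem exists_badSeparator_iff {B : Type*} [Finite B] (M : CoxeterMatrix B)
    (E : B → B → Prop) (hE : M.IsBadEdgeSet E)
    (hch : M.pDiagram.IsChordal) :
    (∃ Bs : Set B, M.IsBadSeparator E Bs) ↔
      ∃ a b c d : B, M.IsMaxIrredSimplex {a, b, c} ∧ M.IsBadSimplex E {a, b, c} ∧
        M a b = 2 ∧ d ∉ ({a, b, c} : Set B) ∪ M.perp {a, b, c} ∧
        M.IsSimplex {a, b, d} := by
  classical
  constructor
  · -- forward: bad separator gives the configuration
    rintro ⟨Bs, a, b, c, haB, hbB, hab2, hcB, hmax, hbad, hsub, f, hfB, hsep, hminsep⟩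
    obtain ⟨hcC, hfC, hnr⟩ := hsep
    set G := M.pDiagram with hG
    set Cf : Set B := {x | ∃ w : G.Walk x f, ∀ z ∈ w.support, z ∈ Bsᶜ} with hCf
    have hCfsub : Cf ⊆ Bsᶜ := by
      rintro x ⟨w, hw⟩; exact hw x w.start_mem_support
    have hcnotCf : c ∉ Cf := by
      rintro ⟨w, hw⟩
      exact hnr (my_reach_of_walk w hw hcC hfC)
    have haneb : a ≠ b := by
      rintro rfl
      have := M.diagonal a
      omega
    -- every element of Bs has a neighbor in the f-component
    have hnbr : ∀ v ∈ Bs, ∃ x ∈ Cf, G.Adj v x := by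
      intro v hv
      have hss : Bs \ {v} ⊂ Bs := Set.sdiff_singleton_ssubset.mpr hv
      have h1 := hminsep _ hss
      have hcC' : c ∈ (Bs \ {v})ᶜ := fun hc => hcC hc.1
      have hfC' : f ∈ (Bs \ {v})ᶜ := fun hc => hfC hc.1
      have hre : (G.induce (Bs \ {v})ᶜ).Reachable ⟨c, hcC'⟩ ⟨f, hfC'⟩ := by
        by_contra hnr'
        exact h1 ⟨hcC', hfC', hnr'⟩
      obtain ⟨w0, hw0⟩ := my_walk_of_reach hcC' hfC' hre
      have hppath : w0.bypass.IsPath := w0.bypass_isPath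
      have hpsup : ∀ z ∈ w0.bypass.support, z ∈ (Bs \ {v})ᶜ :=
        fun z hz => hw0 z (w0.support_bypass_subset hz)
      have hvmem : v ∈ w0.bypass.support := by
        by_contra hvn
        have hsb : ∀ z ∈ w0.bypass.support, z ∈ Bsᶜ := by
          intro z hz
          intro hzB
          have h2 := hpsup z hz
          simp only [Set.mem_compl_iff, Set.mem_diff, Set.mem_singleton_iff, not_and,
            not_not] at h2
          exact hvn ((h2 hzB) ▸ hz)
        exact hnr (my_reach_of_walk w0.bypass hsb hcC hfC)
      set q : G.Walk v f := w0.bypass.dropUntil v hvmem with hqdef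
      have hqpath : q.IsPath := hppath.dropUntil hvmem
      have hqsup : ∀ z ∈ q.support, z ∈ (Bs \ {v})ᶜ :=
        fun z hz => hpsup z (w0.bypass.support_dropUntil_subset hvmem hz)
      clear_value q
      cases q with
      | nil => exact absurd hv hfC
      | @cons _ x₀ _ hvx q' =>
        have hvnot : v ∉ q'.support := ((SimpleGraph.Walk.cons_isPath_iff _ _).mp hqpath).2
        refine ⟨x₀, ⟨q', ?_⟩, hvx⟩
        intro z hz
        intro hzB
        have h2 := hqsup z (by rw [SimpleGraph.Walk.support_cons]; exact List.mem_cons_of_mem _ hz)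
        simp only [Set.mem_compl_iff, Set.mem_diff, Set.mem_singleton_iff, not_and,
          not_not] at h2
        exact hvnot ((h2 hzB) ▸ hz)
    obtain ⟨xa, hxaCf, haxa⟩ := hnbr a haB
    obtain ⟨xb, hxbCf, hbxb⟩ := hnbr b hbB
    have hmemCf : ∀ {u v : B} (w : G.Walk u f), (∀ z ∈ w.support, z ∈ Bsᶜ) →
        v ∈ w.support → v ∈ Cf := by
      intro u v w hw hv
      exact ⟨w.dropUntil v hv, fun z hz => hw z (w.support_dropUntil_subset hv hz)⟩
    set Xa : Set B := {x | x ∈ Cf ∧ G.Adj a x} with hXa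
    set Xb : Set B := {x | x ∈ Cf ∧ G.Adj b x} with hXb
    have hne0 : ∃ (x y : B) (w : G.Walk x y), x ∈ Xa ∧ y ∈ Xb ∧ ∀ z ∈ w.support, z ∈ Cf := by
      obtain ⟨wa, hwa⟩ := hxaCf
      obtain ⟨wb, hwb⟩ := hxbCf
      refine ⟨xa, xb, wa.append wb.reverse, ⟨⟨wa, hwa⟩, haxa⟩, ⟨⟨wb, hwb⟩, hbxb⟩, ?_⟩
      intro z hz
      rw [SimpleGraph.Walk.mem_support_append_iff] at hz
      rcases hz with hz | hz
      · exact hmemCf wa hwa hz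
      · rw [SimpleGraph.Walk.support_reverse, List.mem_reverse] at hz
        exact hmemCf wb hwb hz
    obtain ⟨x, y, w, hxX, hyY, hsupp, hpath, hcl, hXu, hYu⟩ := my_exists_min_walk Xa Xb Cf hne0
    have hax : G.Adj a x := hxX.2
    have hby : G.Adj b y := hyY.2
    have hadjab : G.Adj a b := ⟨haneb, by rw [hab2]; omega⟩
    have hbnot : b ∉ w.support := fun hc => hCfsub (hsupp b hc) hbB
    have hanot : a ∉ w.support := fun hc => hCfsub (hsupp a hc) haB
    set w' : G.Walk x b := w.concat hby.symm with hw'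
    have hpath' : w'.IsPath := my_isPath_concat hpath hby.symm hbnot
    have hsupp' : ∀ z ∈ w'.support, z ∈ w.support ∨ z = b := by
      intro z hz
      rw [hw', SimpleGraph.Walk.support_concat, List.mem_append,
        List.mem_singleton] at hz
      exact hz
    have hedg : w'.edges = w.edges ++ [s(y, b)] := by
      rw [hw', SimpleGraph.Walk.edges_concat, List.concat_eq_append]
    have hcl' : ∀ u ∈ w'.support, ∀ v ∈ w'.support, G.Adj u v → s(u, v) ∈ w'.edges := by
      intro u hu v hv hadj
      rcases hsupp' u hu with hu' | rfl
      · rcases hsupp' v hv with hv' | rfl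
        · rw [hedg, List.mem_append]; exact Or.inl (hcl u hu' v hv' hadj)
        · have huy : u = y := hYu u hu' ⟨hsupp u hu', hadj.symm⟩
          subst huy
          rw [hedg, List.mem_append, List.mem_singleton]
          exact Or.inr rfl
      · rcases hsupp' v hv with hv' | rfl
        · have hvy : v = y := hYu v hv' ⟨hsupp v hv', hadj⟩
          subst hvy
          rw [hedg, List.mem_append, List.mem_singleton]
          exact Or.inr Sym2.eq_swap
        · exact absurd rfl hadj.ne
    have hanot' : a ∉ w'.support := by
      intro hc
      rcases hsupp' a hc with hc' | hc'
      · exact hanot hc'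
      · exact haneb hc'
    have hall := my_apex_adj_all hch w'.length w' rfl hpath' hcl' hanot' hax hadjab
    have hymem' : y ∈ w'.support := by
      rw [hw', SimpleGraph.Walk.support_concat, List.mem_append]
      exact Or.inl w.end_mem_support
    have hay : G.Adj a y := hall y hymem'
    have hyCf : y ∈ Cf := hsupp y w.end_mem_support
    refine ⟨a, b, c, y, hmax, hbad, hab2, ?_, ?_⟩
    · intro hmem
      rcases hmem with hmem | hper
      · simp only [Set.mem_insert_iff, Set.mem_singleton_iff] at hmem
        rcases hmem with rfl | rfl | rfl
        · exact hay.ne rfl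
        · exact hby.ne rfl
        · exact hcnotCf hyCf
      · have h2 : M y c = 2 := hper c (by simp)
        have hcy : G.Adj c y := by
          rw [M.my_pDiagram_adj]
          refine ⟨fun hcon => hcnotCf (hcon ▸ hyCf), ?_⟩
          rw [M.symmetric c y, h2]
          omega
        obtain ⟨wy, hwy⟩ := hyCf
        refine hcnotCf ⟨SimpleGraph.Walk.cons hcy wy, ?_⟩
        intro z hz
        rw [SimpleGraph.Walk.support_cons, List.mem_cons] at hz
        rcases hz with rfl | hz
        · exact hcC
        · exact hwy z hz
    · intro u hu v hv huv
      have h1 : M a b ≠ 0 := by rw [hab2]; omega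
      have h2 : M a y ≠ 0 := ((M.my_pDiagram_adj).mp hay).2
      have h3 : M b y ≠ 0 := ((M.my_pDiagram_adj).mp hby).2
      simp only [Set.mem_insert_iff, Set.mem_singleton_iff] at hu hv
      rcases hu with rfl | rfl | rfl <;> rcases hv with rfl | rfl | rfl <;>
        first
          | exact absurd rfl huv
          | assumption
          | (rw [M.symmetric]; assumption)
  · -- backward: configuration gives a bad separator
    rintro ⟨a, b, c, d, hmax, hbad, hab2, hdnot, hsimp3⟩
    set G := M.pDiagram with hG
    obtain ⟨hab, hac, hbc, hac2, hbc2⟩ := M.my_three_facts hmax.1 hab2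
    have hsimpA := hmax.1.1
    have hamem : a ∈ ({a, b, c} : Set B) := by simp
    have hbmem : b ∈ ({a, b, c} : Set B) := by simp
    have hcmem : c ∈ ({a, b, c} : Set B) := by simp
    have hMac0 : M a c ≠ 0 := hsimpA hamem hcmem hac
    have hMbc0 : M b c ≠ 0 := hsimpA hbmem hcmem hbc
    have hd1 : d ∉ ({a, b, c} : Set B) := fun hc => hdnot (Or.inl hc)
    have hd2 : d ∉ M.perp {a, b, c} := fun hc => hdnot (Or.inr hc)
    have hda : a ≠ d := fun hc => hd1 (by simp [hc.symm])
    have hdb : b ≠ d := fun hc => hd1 (by simp [hc.symm])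
    have hdc : c ≠ d := fun hc => hd1 (by simp [hc.symm])
    have habd : a ∈ ({a, b, d} : Set B) := by simp
    have hbbd : b ∈ ({a, b, d} : Set B) := by simp
    have hdbd : d ∈ ({a, b, d} : Set B) := by simp
    have hMad0 : M a d ≠ 0 := hsimp3 habd hdbd hda
    have hMbd0 : M b d ≠ 0 := hsimp3 hbbd hdbd hdb
    set K : Set B := {a, b} ∪ M.perp {a, b, c} with hK
    have hcK : c ∉ K := by
      rintro (hc | hc)
      · simp only [Set.mem_insert_iff, Set.mem_singleton_iff] at hc
        rcases hc with rfl | rfl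
        · exact hac rfl
        · exact hbc rfl
      · have h1 := hc c hcmem
        have h2 := M.diagonal c
        omega
    have hdK : d ∉ K := by
      rintro (hc | hc)
      · simp only [Set.mem_insert_iff, Set.mem_singleton_iff] at hc
        rcases hc with rfl | rfl
        · exact hda rfl
        · exact hdb rfl
      · exact hd2 hc
    have haK : a ∈ K := Or.inl (by simp)
    have hbK : b ∈ K := Or.inl (by simp)
    have hGac : G.Adj a c := ⟨hac, hMac0⟩
    have hGbc : G.Adj b c := ⟨hbc, hMbc0⟩
    have hGad : G.Adj a d := ⟨hda, hMad0⟩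
    have hGbd : G.Adj b d := ⟨hdb, hMbd0⟩
    by_cases hreach : ∃ w : G.Walk c d, ∀ z ∈ w.support, z ∈ Kᶜ
    · exfalso
      obtain ⟨x, y, w, hxX, hyY, hsupp, hpath, hcl, _, _⟩ :=
        my_exists_min_walk {c} {d} Kᶜ
          (by obtain ⟨w, hw⟩ := hreach; exact ⟨c, d, w, rfl, rfl, hw⟩)
      have hxc : c = x := hxX.symm
      subst hxc
      have hyd : d = y := hyY.symm
      subst hyd
      have hanotsup : a ∉ w.support := fun hc => (hsupp a hc) haK
      have hbnotsup : b ∉ w.support := fun hc => (hsupp b hc) hbK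
      have hall_a := my_apex_adj_all hch w.length w rfl hpath hcl hanotsup hGac hGad
      have hall_b := my_apex_adj_all hch w.length w rfl hpath hcl hbnotsup hGbc hGbd
      cases w with
      | nil => exact hdc rfl
      | @cons _ v1 _ hcx w' =>
        have hv1sup : v1 ∈ (SimpleGraph.Walk.cons hcx w').support := by
          rw [SimpleGraph.Walk.support_cons]
          exact List.mem_cons_of_mem _ w'.start_mem_support
        have hav1 : G.Adj a v1 := hall_a v1 hv1sup
        have hbv1 : G.Adj b v1 := hall_b v1 hv1sup
        have hv1K : v1 ∉ K := hsupp v1 hv1sup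
        have hv1abc : v1 ∉ ({a, b, c} : Set B) := by
          intro hmem
          simp only [Set.mem_insert_iff, Set.mem_singleton_iff] at hmem
          rcases hmem with rfl | rfl | rfl
          · exact hav1.ne rfl
          · exact hbv1.ne rfl
          · exact hcx.ne rfl
        have hv1perp : v1 ∉ M.perp {a, b, c} := fun hc => hv1K (Or.inr hc)
        obtain ⟨t₀, ht₀mem, ht₀⟩ : ∃ t₀ ∈ ({a, b, c} : Set B), M v1 t₀ ≠ 2 := by
          by_contra hcon
          push_neg at hcon
          exact hv1perp hcon
        apply hmax.2 (insert v1 {a, b, c}) (Set.ssubset_insert hv1abc)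
        have fab : M a b ≠ 0 := by rw [hab2]; omega
        have fva : M v1 a ≠ 0 := fun h =>
          ((M.my_pDiagram_adj).mp hav1).2 (by rw [M.symmetric]; exact h)
        have fvb : M v1 b ≠ 0 := fun h =>
          ((M.my_pDiagram_adj).mp hbv1).2 (by rw [M.symmetric]; exact h)
        have fvc : M v1 c ≠ 0 := fun h =>
          ((M.my_pDiagram_adj).mp hcx).2 (by rw [M.symmetric]; exact h)
        constructor
        · intro u hu v hv huv
          simp only [Set.mem_insert_iff, Set.mem_singleton_iff] at hu hv
          rcases hu with rfl | rfl | rfl | rfl <;> rcases hv with rfl | rfl | rfl | rfl <;>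
            first
              | exact absurd rfl huv
              | assumption
              | (rw [M.symmetric]; assumption)
        · have hcmem' : c ∈ insert v1 ({a, b, c} : Set B) := Set.mem_insert_of_mem _ hcmem
          have hsub' : ({a, b, c} : Set B) ⊆ insert v1 {a, b, c} := Set.subset_insert _ _
          have hreach_of : ∀ (t' : B) (hm : t' ∈ ({a, b, c} : Set B)),
              (M.cDiagramOn (insert v1 {a, b, c})).Reachable ⟨t', hsub' hm⟩ ⟨c, hcmem'⟩ := by
            intro t' hm
            rcases hm with rfl | rfl | rfl
            · exact SimpleGraph.Adj.reachable ⟨hac, hac2⟩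
            · exact SimpleGraph.Adj.reachable ⟨hbc, hbc2⟩
            · exact SimpleGraph.Reachable.refl _
          have hv1mem' : v1 ∈ insert v1 ({a, b, c} : Set B) := Set.mem_insert _ _
          have hv1t₀ : v1 ≠ t₀ := fun h => hv1abc (h ▸ ht₀mem)
          have hadj : (M.cDiagramOn (insert v1 ({a, b, c} : Set B))).Adj
              ⟨v1, hv1mem'⟩ ⟨t₀, hsub' ht₀mem⟩ := ⟨hv1t₀, ht₀⟩
          have key : ∀ t : ↥(insert v1 ({a, b, c} : Set B)),
              (M.cDiagramOn (insert v1 {a, b, c})).Reachable t ⟨c, hcmem'⟩ := by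
            rintro ⟨t, ht⟩
            rcases ht with rfl | ht
            · exact hadj.reachable.trans (hreach_of t₀ ht₀mem)
            · exact hreach_of t ht
          haveI : Nonempty ↥(insert v1 ({a, b, c} : Set B)) := ⟨⟨c, hcmem'⟩⟩
          exact SimpleGraph.Connected.mk (fun u v => (key u).trans (key v).symm)
    · have hcKc : c ∈ Kᶜ := hcK
      have hdKc : d ∈ Kᶜ := hdK
      have hKsep : G.IsSeparator c d K := by
        refine ⟨hcKc, hdKc, fun hr => hreach ?_⟩
        exact my_walk_of_reach hcKc hdKc hr
      set F : Set (Set B) := {S | S ⊆ K ∧ G.IsSeparator c d S} with hF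
      have hFfin : F.Finite := Set.toFinite F
      obtain ⟨Bs, hBsF, hminw⟩ : ∃ Bs ∈ F, ∀ S ∈ F, id S ≤ id Bs → id Bs = id S := by
        obtain ⟨Bs, hm⟩ := hFfin.exists_minimal ⟨K, subset_refl K, hKsep⟩
        exact ⟨Bs, hm.1, fun S hS hsub => (hm.eq_of_subset hS hsub).symm⟩
      obtain ⟨hBsK, hBsSep⟩ := hBsF
      have hcBs : c ∉ Bs := fun h => hcK (hBsK h)
      have hdBs : d ∉ Bs := fun h => hdK (hBsK h)
      have haBs : a ∈ Bs := by
        by_contra haBs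
        obtain ⟨hc', hd', hnr'⟩ := hBsSep
        apply hnr'
        refine my_reach_of_walk
          (SimpleGraph.Walk.cons hGac.symm (SimpleGraph.Walk.cons hGad SimpleGraph.Walk.nil))
          ?_ hc' hd'
        intro z hz
        simp only [SimpleGraph.Walk.support_cons, SimpleGraph.Walk.support_nil,
          List.mem_cons, List.mem_singleton] at hz
        rcases hz with rfl | rfl | rfl | h
        · exact hcBs
        · exact haBs
        · exact hdBs
        · exact absurd h List.not_mem_nil
      have hbBs : b ∈ Bs := by
        by_contra hbBs
        obtain ⟨hc', hd', hnr'⟩ := hBsSep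
        apply hnr'
        refine my_reach_of_walk
          (SimpleGraph.Walk.cons hGbc.symm (SimpleGraph.Walk.cons hGbd SimpleGraph.Walk.nil))
          ?_ hc' hd'
        intro z hz
        simp only [SimpleGraph.Walk.support_cons, SimpleGraph.Walk.support_nil,
          List.mem_cons, List.mem_singleton] at hz
        rcases hz with rfl | rfl | rfl | h
        · exact hcBs
        · exact hbBs
        · exact hdBs
        · exact absurd h List.not_mem_nil
      refine ⟨Bs, a, b, c, haBs, hbBs, hab2, hcBs, hmax, hbad, hBsK, d, hdBs, hBsSep, ?_⟩
      intro Bs' hss hsep'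
      have heq := hminw Bs' ⟨hss.subset.trans hBsK, hsep'⟩ hss.subset
      simp only [id] at heq
      exact hss.ne heq.symm
end

section
/- Let (W,S) be a Coxeter system with exactly one bad 5-edge {x,y}. Let C ⊆ S and let A = {a,b,c} be a bad irreducible simplex with m(a,b) = 2 such that {a,b} ⊆ C ⊆ {a,b} ∪ A^⊥. Then the pair {a,b} is uniquely determined by C (namely {a,b} = C − {x,y}^⊥) and {c} = {x,y} − {a,b}. -/
private lemma exists_neighbor {B : Type*} (M : CoxeterMatrix B) {A : Set B}
    (hconn : (M.cDiagramOn A).Connected) {u v : B} (hu : u ∈ A) (hv : v ∈ A)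
    (huv : u ≠ v) : ∃ t ∈ A, t ≠ u ∧ M u t ≠ 2 := by
  obtain ⟨w⟩ := hconn.preconnected ⟨u, hu⟩ ⟨v, hv⟩
  have hnil : ¬ w.Nil := by
    apply SimpleGraph.Walk.not_nil_of_ne
    intro h; exact huv (congrArg Subtype.val h)
  have hadj := w.adj_snd hnil
  exact ⟨(w.getVert 1).1, (w.getVert 1).2, fun h => hadj.1 h.symm, hadj.2⟩

/-- **Lemma 5.1.** Let `(W,S)` be a Coxeter system whose only bad edge is the bad
5-edge `{x,y}`. Let `C ⊆ S` and let `A = {a,b,c}` be a bad irreducible simplex with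
`m(a,b) = 2` such that `{a,b} ⊆ C ⊆ {a,b} ∪ A^⊥`. Then the pair of eyes is
determined by `C`, namely `{a,b} = C − {x,y}^⊥`, and `{c} = {x,y} − {a,b}`. -/
theorem eyes_eq_and_focus_eq {B : Type*} (M : CoxeterMatrix B)
    (x y : B) (hxy : M.IsBad5Edge x y)
    (C : Set B) (a b c : B)
    (hA : M.IsBadSimplex (CoxeterMatrix.singleEdge x y) {a, b, c})
    (hab : M a b = 2)
    (habC : ({a, b} : Set B) ⊆ C)
    (hC : C ⊆ ({a, b} : Set B) ∪ M.perp {a, b, c}) :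
    ({a, b} : Set B) = C \ M.perp {x, y} ∧
      ({c} : Set B) = ({x, y} : Set B) \ ({a, b} : Set B) := by
  obtain ⟨⟨hsimp, hconn⟩, u, hu, v, hv, hedge⟩ := hA
  obtain ⟨hxney, hxy5, _⟩ := hxy
  -- x and y belong to {a,b,c}
  have hxA : x ∈ ({a, b, c} : Set B) := by
    rcases hedge with ⟨hux, hvy⟩ | ⟨huy, hvx⟩
    · rwa [hux] at hu
    · rwa [hvx] at hv
  have hyA : y ∈ ({a, b, c} : Set B) := by
    rcases hedge with ⟨hux, hvy⟩ | ⟨huy, hvx⟩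
    · rwa [hvy] at hv
    · rwa [huy] at hu
  have haneb : a ≠ b := by
    intro h; rw [h] at hab; simp at hab
  -- x and y cannot both lie in {a,b}
  have hnotboth : ¬ (x ∈ ({a, b} : Set B) ∧ y ∈ ({a, b} : Set B)) := by
    rintro ⟨hx2, hy2⟩
    rcases hx2 with hx2 | hx2 <;> rcases hy2 with hy2 | hy2 <;>
      simp -failIfUnchanged only [Set.mem_singleton_iff] at *
    · exact hxney (hx2.trans hy2.symm)
    · rw [hx2, hy2, hab] at hxy5; exact (by norm_num : (2:ℕ) ≠ 5) hxy5
    · rw [hx2, hy2, M.symmetric, hab] at hxy5; exact (by norm_num : (2:ℕ) ≠ 5) hxy5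
    · exact hxney (hx2.trans hy2.symm)
  have hcnab : c ∉ ({a, b} : Set B) := by
    intro hc
    apply hnotboth
    constructor
    · rcases hxA with h | h | h
      · exact Or.inl h
      · exact Or.inr h
      · rw [h]; exact hc
    · rcases hyA with h | h | h
      · exact Or.inl h
      · exact Or.inr h
      · rw [h]; exact hc
  have hcx : c = x ∨ c = y := by
    by_contra h
    push_neg at h
    apply hnotboth
    constructor
    · rcases hxA with hh | hh | hh
      · exact Or.inl hh
      · exact Or.inr hh
      · exact absurd hh.symm h.1
    · rcases hyA with hh | hh | hh
      · exact Or.inl hh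
      · exact Or.inr hh
      · exact absurd hh.symm h.2
  have hanec : a ≠ c := fun h => hcnab (Or.inl h.symm)
  have hbnec : b ≠ c := fun h => hcnab (Or.inr h.symm)
  -- by connectedness, M a c ≠ 2 and M b c ≠ 2
  have haA : a ∈ ({a, b, c} : Set B) := Or.inl rfl
  have hbA : b ∈ ({a, b, c} : Set B) := Or.inr (Or.inl rfl)
  have hcA : c ∈ ({a, b, c} : Set B) := Or.inr (Or.inr rfl)
  have hac : M a c ≠ 2 := by
    obtain ⟨t, htA, htne, htm⟩ := exists_neighbor M hconn haA hcA hanec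
    rcases htA with h | h | h
    · exact absurd h htne
    · rw [h] at htm; exact absurd hab htm
    · rwa [h] at htm
  have hbc : M b c ≠ 2 := by
    obtain ⟨t, htA, htne, htm⟩ := exists_neighbor M hconn hbA hcA hbnec
    rcases htA with h | h | h
    · rw [h, M.symmetric] at htm; exact absurd hab htm
    · exact absurd h htne
    · rwa [h] at htm
  constructor
  · apply Set.eq_of_subset_of_subset
    · rintro s (rfl | rfl)
      · refine ⟨habC (Or.inl rfl), fun hp => ?_⟩
        rcases hcx with h | h
        · exact hac (by rw [h]; exact hp x (Or.inl rfl))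
        · exact hac (by rw [h]; exact hp y (Or.inr rfl))
      · refine ⟨habC (Or.inr rfl), fun hp => ?_⟩
        rcases hcx with h | h
        · exact hbc (by rw [h]; exact hp x (Or.inl rfl))
        · exact hbc (by rw [h]; exact hp y (Or.inr rfl))
    · rintro s ⟨hsC, hsp⟩
      rcases hC hsC with h | h
      · exact h
      · exfalso
        exact hsp fun t ht => by
          rcases ht with rfl | rfl
          · exact h t hxA
          · exact h t hyA
  · rcases hcx with rfl | rfl
    · -- c = x, so y ∈ {a,b}
      have hy2 : y ∈ ({a, b} : Set B) := by
        rcases hyA with h | h | h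
        · exact Or.inl h
        · exact Or.inr h
        · exact absurd h.symm hxney
      apply Set.eq_of_subset_of_subset
      · rintro s rfl; exact ⟨Or.inl rfl, hcnab⟩
      · rintro s ⟨hs1, hs2⟩
        rcases hs1 with rfl | rfl
        · rfl
        · exact absurd hy2 hs2
    · have hx2 : x ∈ ({a, b} : Set B) := by
        rcases hxA with h | h | h
        · exact Or.inl h
        · exact Or.inr h
        · exact absurd h hxney
      apply Set.eq_of_subset_of_subset
      · rintro s rfl; exact ⟨Or.inr rfl, hcnab⟩
      · rintro s ⟨hs1, hs2⟩
        rcases hs1 with rfl | rfl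
        · exact absurd hx2 hs2
        · rfl
end

section
/- Let (W,S) be a Coxeter system with exactly one bad 5-edge, and let D be a gross separator of S with head A = {a,b,c} and eyes {a,b}. Then the set of good foci of D equals the set of vertices of the connected components of Γ(W,S) − D that contain a neighbor of a and a neighbor of b but do not contain c. -/
namespace SepAux

open SimpleGraph

variable {V : Type*} (G : SimpleGraph V)

lemma reach_mono {s t : Set V} (hst : s ⊆ t) {p q : V} (hp : p ∈ s) (hq : q ∈ s)
    (h : (G.induce s).Reachable ⟨p, hp⟩ ⟨q, hq⟩) :
    (G.induce t).Reachable ⟨p, hst hp⟩ ⟨q, hst hq⟩ :=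
  h.map (SimpleGraph.induceHom (SimpleGraph.Hom.id) (Set.mapsTo_id s |>.mono_right hst))

lemma key (D : Set V) (a : V) :
    ∀ {p q : ↥((D \ {a})ᶜ)} (_ : (G.induce (D \ {a})ᶜ).Walk p q) (hq : (q : V) ∈ Dᶜ),
      (∃ hp : (p : V) ∈ Dᶜ, (G.induce Dᶜ).Reachable ⟨p, hp⟩ ⟨q, hq⟩) ∨
      (∃ u, ∃ hu : u ∈ Dᶜ, G.Adj a u ∧ (G.induce Dᶜ).Reachable ⟨u, hu⟩ ⟨q, hq⟩) := by
  intro p q w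
  induction w with
  | nil => intro hq; exact Or.inl ⟨hq, Reachable.refl _⟩
  | @cons p p' q h w ih =>
    intro hq
    rcases ih hq with ⟨hp', r⟩ | ⟨u, hu, hadj, r⟩
    · by_cases hp : (p : V) ∈ Dᶜ
      · exact Or.inl ⟨hp, (Reachable.refl _).trans ((SimpleGraph.Adj.reachable
          (show (G.induce Dᶜ).Adj ⟨p, hp⟩ ⟨p', hp'⟩ from h)).trans r)⟩
      · have hpa : (p : V) = a := by
          have := p.2
          simp only [Set.mem_compl_iff, Set.mem_diff, Set.mem_singleton_iff, not_and,
            not_not] at this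
          simp only [Set.mem_compl_iff, not_not] at hp
          exact this hp
        have h' : G.Adj (p : V) (p' : V) := h
        rw [hpa] at h'
        exact Or.inr ⟨p', hp', h', r⟩
    · exact Or.inr ⟨u, hu, hadj, r⟩

lemma extract (D : Set V) (a c f : V) (ha : a ∈ D) (hc : c ∈ Dᶜ) (hf : f ∈ Dᶜ)
    (hsep : G.IsSeparator c f D) (hns : ¬ G.IsSeparator c f (D \ {a})) :
    ∃ u, G.Adj a u ∧ G.InSepComp D u f := by
  have hsub : Dᶜ ⊆ (D \ {a})ᶜ := Set.compl_subset_compl.mpr Set.diff_subset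
  have hc' : c ∈ (D \ {a})ᶜ := hsub hc
  have hf' : f ∈ (D \ {a})ᶜ := hsub hf
  have hr : (G.induce (D \ {a})ᶜ).Reachable ⟨c, hc'⟩ ⟨f, hf'⟩ := by
    by_contra hnr; exact hns ⟨hc', hf', hnr⟩
  obtain ⟨w⟩ := hr
  rcases key G D a w hf with ⟨hp, r⟩ | ⟨u, hu, hadj, r⟩
  · obtain ⟨hc2, hf2, hn⟩ := hsep
    exact (hn r).elim
  · exact ⟨u, hadj, hu, hf, r⟩

lemma construct (D : Set V) (a c g u : V) (ha : a ∈ D) (hc : c ∈ Dᶜ) (hca : G.Adj c a)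
    (hau : G.Adj a u) (hcomp : G.InSepComp D u g) : ¬ G.IsSeparator c g (D \ {a}) := by
  obtain ⟨hu, hg, r⟩ := hcomp
  rintro ⟨hc', hg', hn⟩
  apply hn
  have hsub : Dᶜ ⊆ (D \ {a})ᶜ := Set.compl_subset_compl.mpr Set.diff_subset
  have ha' : a ∈ (D \ {a})ᶜ := by simp
  refine (SimpleGraph.Adj.reachable
    (show (G.induce (D \ {a})ᶜ).Adj ⟨c, hc'⟩ ⟨a, ha'⟩ from hca)).trans ?_
  refine (SimpleGraph.Adj.reachable
    (show (G.induce (D \ {a})ᶜ).Adj ⟨a, ha'⟩ ⟨u, hsub hu⟩ from hau)).trans ?_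
  exact reach_mono G hsub hu hg r

end SepAux

/-- **Lemma 5.2.** Let `(W,S)` be a Coxeter system with exactly one bad 5-edge, and
let `D = {a,b} ∪ A^⊥` be a gross separator with head `A = {a,b,c}` and eyes `{a,b}`.
Then the set of good foci of `D` is the set of vertices of the connected components
of `Γ(W,S) − D` that contain a neighbor of `a` and a neighbor of `b` but do not
contain `c`. -/
theorem goodFoci_eq_components {B : Type*} (M : CoxeterMatrix B)
    (x y : B) (hxy : M.IsBad5Edge x y) (a b c : B) (hab : M a b = 2)
    (hA : M.IsMaxIrredSimplex {a, b, c})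
    (hbad : M.IsBadSimplex (CoxeterMatrix.singleEdge x y) {a, b, c})
    (hc : c ∉ ({a, b} : Set B) ∪ M.perp {a, b, c})
    (hgross : ∃ f, f ∉ ({a, b} : Set B) ∪ M.perp {a, b, c} ∧
      M.pDiagram.IsSeparator c f (({a, b} : Set B) ∪ M.perp {a, b, c}) ∧
      ¬ M.pDiagram.IsSeparator c f ((({a, b} : Set B) ∪ M.perp {a, b, c}) \ {a}) ∧
      ¬ M.pDiagram.IsSeparator c f ((({a, b} : Set B) ∪ M.perp {a, b, c}) \ {b})) :
    {f | f ∉ ({a, b} : Set B) ∪ M.perp {a, b, c} ∧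
        M.pDiagram.IsSeparator c f (({a, b} : Set B) ∪ M.perp {a, b, c}) ∧
        ¬ M.pDiagram.IsSeparator c f ((({a, b} : Set B) ∪ M.perp {a, b, c}) \ {a}) ∧
        ¬ M.pDiagram.IsSeparator c f ((({a, b} : Set B) ∪ M.perp {a, b, c}) \ {b})} =
      {g | g ∉ ({a, b} : Set B) ∪ M.perp {a, b, c} ∧
        (∃ u, M.pDiagram.Adj a u ∧
          M.pDiagram.InSepComp (({a, b} : Set B) ∪ M.perp {a, b, c}) u g) ∧
        (∃ v, M.pDiagram.Adj b v ∧
          M.pDiagram.InSepComp (({a, b} : Set B) ∪ M.perp {a, b, c}) v g) ∧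
        ¬ M.pDiagram.InSepComp (({a, b} : Set B) ∪ M.perp {a, b, c}) g c} := by
  have hab' : a ≠ b := by
    intro h
    rw [h, M.diagonal] at hab
    exact absurd hab (by norm_num)
  have hcab : c ∉ ({a, b} : Set B) := fun h => hc (Or.inl h)
  have hca : c ≠ a := fun h => hcab (by simp [h])
  have hcb : c ≠ b := fun h => hcab (by simp [h])
  have hsimp := hA.1.1
  have hMac : M a c ≠ 0 := hsimp (by simp) (by simp) (Ne.symm hca)
  have hMbc : M b c ≠ 0 := hsimp (by simp) (by simp) (Ne.symm hcb)
  have hGca : M.pDiagram.Adj c a := ⟨hca, by rw [M.symmetric]; exact hMac⟩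
  have hGcb : M.pDiagram.Adj c b := ⟨hcb, by rw [M.symmetric]; exact hMbc⟩
  have haD : a ∈ ({a, b} : Set B) ∪ M.perp {a, b, c} := Or.inl (by simp)
  have hbD : b ∈ ({a, b} : Set B) ∪ M.perp {a, b, c} := Or.inl (by simp)
  have hcD : c ∈ (({a, b} : Set B) ∪ M.perp {a, b, c})ᶜ := hc
  ext f
  simp only [Set.mem_setOf_eq]
  constructor
  · rintro ⟨hf, hsep, hna, hnb⟩
    refine ⟨hf, ?_, ?_, ?_⟩
    · exact SepAux.extract M.pDiagram _ a c f haD hcD hf hsep hna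
    · exact SepAux.extract M.pDiagram _ b c f hbD hcD hf hsep hnb
    · rintro ⟨hf', hc', r⟩
      obtain ⟨hc2, hf2, hn⟩ := hsep
      exact hn r.symm
  · rintro ⟨hg, ⟨u, hau, hcu⟩, ⟨v, hbv, hcv⟩, hnc⟩
    refine ⟨hg, ⟨hcD, hg, fun r => hnc ⟨hg, hcD, r.symm⟩⟩, ?_, ?_⟩
    · exact SepAux.construct M.pDiagram _ a c f u haD hcD hGca hau hcu
    · exact SepAux.construct M.pDiagram _ b c f v hbD hcD hGcb hbv hcv
end
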